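/- Suppose H satisfies (H1)–(H3) and there exists a continuous function A : ℝ → ℝ⁺ with |p · ∂H/∂p(x,p,u)| ≤ A(H(x,p,u))·(1 + |u|) for all (x,p,u). Then along every integral curve (x(s), p(s), u(s)) of the contact Hamiltonian vector field X_H, the u-component satisfies |u̇(s)| ≤ A₀ · |u(s)| + A₀ + e^{λ|s|}·|H(x(0),p(0),u(0))| where A₀ = sup{A(h) : |h| ≤ e^{λ|t|}|H(x(0),p(0),u(0))|}; in particular |u(s)| remains bounded on every compact time interval [−t, t]. (Estimate in the proof of Lemma A.1.) -/

import Mathlib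

open Filter MeasureTheory Set
open scoped RealInnerProductSpace Topology NNReal

noncomputable section

/-- The model space: the closed manifold `M` is realized as a compact subset of a
Euclidean space (Whitney embedding), and the fibers of `T*M` as Euclidean vectors. -/
abbrev Euc (n : ℕ) := EuclideanSpace ℝ (Fin n)

variable {n : ℕ}

/-- `∂H/∂p`, the gradient of `H` in the momentum variable. -/
def pGrad (H : Euc n → Euc n → ℝ → ℝ) (x p : Euc n) (u : ℝ) : Euc n :=
  gradient (fun q => H x q u) p

/-- `∂H/∂x`, the gradient of `H` in the position variable. -/
def xGrad (H : Euc n → Euc n → ℝ → ℝ) (x p : Euc n) (u : ℝ) : Euc n :=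
  gradient (fun y => H y p u) x

/-- `∂H/∂u`, the derivative of `H` in the value variable. -/
def uDeriv (H : Euc n → Euc n → ℝ → ℝ) (x p : Euc n) (u : ℝ) : ℝ :=
  deriv (fun w => H x p w) u

/-- The contact Hamiltonian vector field
`ẋ = ∂H/∂p, ṗ = −∂H/∂x − (∂H/∂u)p, u̇ = (∂H/∂p)·p − H`. -/
def contactVF (H : Euc n → Euc n → ℝ → ℝ) :
    Euc n × Euc n × ℝ → Euc n × Euc n × ℝ := fun z =>
  (pGrad H z.1 z.2.1 z.2.2,
   -xGrad H z.1 z.2.1 z.2.2 - uDeriv H z.1 z.2.1 z.2.2 • z.2.1,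
   ⟪pGrad H z.1 z.2.1 z.2.2, z.2.1⟫ - H z.1 z.2.1 z.2.2)

/-- (H1) Positive definiteness of `∂²H/∂p²`. -/
def PosDefInP (H : Euc n → Euc n → ℝ → ℝ) : Prop :=
  ∀ x u p v, v ≠ 0 → 0 < ⟪(fderiv ℝ (fun q => pGrad H x q u) p) v, v⟫

/-- (H2) Superlinearity of `H` in `p`. -/
def Superlinear (H : Euc n → Euc n → ℝ → ℝ) : Prop :=
  ∀ x u, Tendsto (fun p : Euc n => H x p u / ‖p‖) (cocompact (Euc n)) atTop

/-- (H3) `|∂H/∂u| ≤ λ`. -/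
def LipInU (H : Euc n → Euc n → ℝ → ℝ) (lam : ℝ) : Prop :=
  ∀ x p u, |uDeriv H x p u| ≤ lam

/-- `H` is a `C³` function. -/
def C3 (H : Euc n → Euc n → ℝ → ℝ) : Prop :=
  ContDiff ℝ 3 (fun z : Euc n × Euc n × ℝ => H z.1 z.2.1 z.2.2)

/-- `L` is the Legendre transform of `H`: `L(x,v,u) = sup_p {⟨p,v⟩ − H(x,p,u)}`. -/
def IsLegendre (H L : Euc n → Euc n → ℝ → ℝ) : Prop :=
  ∀ x v u, L x v u = sSup {r | ∃ p : Euc n, r = ⟪p, v⟫ - H x p u}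

/-- `Φ` is the (complete) flow of the contact Hamiltonian vector field `X_H`. -/
def IsContactFlow (H : Euc n → Euc n → ℝ → ℝ)
    (Φ : ℝ → Euc n × Euc n × ℝ → Euc n × Euc n × ℝ) : Prop :=
  (∀ z, Φ 0 z = z) ∧ ∀ z t, HasDerivAt (fun s => Φ s z) (contactVF H (Φ t z)) t

/-- Absolutely continuous curve on `[a,b]`: an indefinite integral of an integrable map. -/
def AbsCont (γ : ℝ → Euc n) (a b : ℝ) : Prop :=
  ∃ g : ℝ → Euc n, IntervalIntegrable g volume a b ∧
    ∀ s ∈ Icc a b, γ s = γ a + ∫ τ in a..s, g τ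

/-- The superdifferential `D⁺φ(x)` of `φ` at `x` (relative to `M`):
`limsup_{y→x} (φ(y) − φ(x) − ⟨p, y−x⟩)/|y−x| ≤ 0`. -/
def SuperDiff (M : Set (Euc n)) (φ : Euc n → ℝ) (x : Euc n) : Set (Euc n) :=
  {p | ∀ ε > (0:ℝ), ∀ᶠ y in 𝓝[M \ {x}] x,
      φ y - φ x - ⟪p, y - x⟫ ≤ ε * ‖y - x‖}

/-- `φ` is a viscosity subsolution of `H(x,∂ₓu,u) = c` on `U`:
`H(x,p,φ(x)) ≤ c` for every `x ∈ U` and `p ∈ D⁺φ(x)`. -/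
def IsVSub (M : Set (Euc n)) (H : Euc n → Euc n → ℝ → ℝ) (c : ℝ)
    (φ : Euc n → ℝ) (U : Set (Euc n)) : Prop :=
  ∀ x ∈ U, ∀ p ∈ SuperDiff M φ x, H x p (φ x) ≤ c

/-- `φ` is a strict viscosity subsolution of `H(x,∂ₓu,u) = 0` on `M`: a viscosity
subsolution which is strict at every point of `M`. -/
def IsStrictVSub (M : Set (Euc n)) (H : Euc n → Euc n → ℝ → ℝ)
    (φ : Euc n → ℝ) : Prop :=
  IsVSub M H 0 φ M ∧
  ∀ x₀ ∈ M, ∃ V : Set (Euc n), IsOpen V ∧ x₀ ∈ V ∧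
    ∃ c < (0:ℝ), IsVSub M H c φ (V ∩ M)

/-- The backward solution semigroup `T_t⁻`: the continuous function satisfying
`T_t⁻φ(x) = inf_{γ(t)=x} {φ(γ(0)) + ∫₀ᵗ L(γ,γ̇,T_τ⁻φ(γ(τ))) dτ}` over absolutely
continuous curves in `M`. -/
def IsBackwardSemigroup (M : Set (Euc n)) (L : Euc n → Euc n → ℝ → ℝ)
    (φ : Euc n → ℝ) (Tm : ℝ → Euc n → ℝ) : Prop :=
  (∀ x ∈ M, Tm 0 x = φ x) ∧
  ContinuousOn (fun q : ℝ × Euc n => Tm q.1 q.2) (Ici 0 ×ˢ M) ∧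
  ∀ t > (0:ℝ), ∀ x ∈ M,
    Tm t x = sInf {r | ∃ γ : ℝ → Euc n, AbsCont γ 0 t ∧
      (∀ τ ∈ Icc (0:ℝ) t, γ τ ∈ M) ∧ γ t = x ∧
      r = φ (γ 0) + ∫ τ in (0:ℝ)..t, L (γ τ) (deriv γ τ) (Tm τ (γ τ))}

/-- The forward solution semigroup `T_t⁺`: the continuous function satisfying
`T_t⁺φ(x) = sup_{γ(0)=x} {φ(γ(t)) − ∫₀ᵗ L(γ,γ̇,T_{t−τ}⁺φ(γ(τ))) dτ}` over absolutely
continuous curves in `M`. -/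
def IsForwardSemigroup (M : Set (Euc n)) (L : Euc n → Euc n → ℝ → ℝ)
    (φ : Euc n → ℝ) (Tp : ℝ → Euc n → ℝ) : Prop :=
  (∀ x ∈ M, Tp 0 x = φ x) ∧
  ContinuousOn (fun q : ℝ × Euc n => Tp q.1 q.2) (Ici 0 ×ˢ M) ∧
  ∀ t > (0:ℝ), ∀ x ∈ M,
    Tp t x = sSup {r | ∃ γ : ℝ → Euc n, AbsCont γ 0 t ∧
      (∀ τ ∈ Icc (0:ℝ) t, γ τ ∈ M) ∧ γ 0 = x ∧
      r = φ (γ t) - ∫ τ in (0:ℝ)..t, L (γ τ) (deriv γ τ) (Tp (t - τ) (γ τ))}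

/-- The backward implicit action function `h_{x₀,u₀}(x,t)`, characterized by the
implicit variational principle over Lipschitz curves. -/
def IsBackwardAction (M : Set (Euc n)) (L : Euc n → Euc n → ℝ → ℝ)
    (hb : Euc n → ℝ → Euc n → ℝ → ℝ) : Prop :=
  ContinuousOn (fun q : Euc n × ℝ × Euc n × ℝ => hb q.1 q.2.1 q.2.2.1 q.2.2.2)
    (M ×ˢ (univ : Set ℝ) ×ˢ M ×ˢ Ioi 0) ∧
  ∀ x₀ ∈ M, ∀ u₀ : ℝ, ∀ x ∈ M, ∀ t > (0:ℝ),
    hb x₀ u₀ x t = u₀ + sInf {a | ∃ γ : ℝ → Euc n,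
      (∃ K : ℝ≥0, LipschitzOnWith K γ (Icc 0 t)) ∧
      (∀ τ ∈ Icc (0:ℝ) t, γ τ ∈ M) ∧ γ 0 = x₀ ∧ γ t = x ∧
      a = ∫ τ in (0:ℝ)..t, L (γ τ) (deriv γ τ) (hb x₀ u₀ (γ τ) τ)}

/-- The forward implicit action function `h^{x₀,u₀}(x,t)`, characterized by the
implicit variational principle over Lipschitz curves. -/
def IsForwardAction (M : Set (Euc n)) (L : Euc n → Euc n → ℝ → ℝ)
    (hf : Euc n → ℝ → Euc n → ℝ → ℝ) : Prop :=
  ContinuousOn (fun q : Euc n × ℝ × Euc n × ℝ => hf q.1 q.2.1 q.2.2.1 q.2.2.2)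
    (M ×ˢ (univ : Set ℝ) ×ˢ M ×ˢ Ioi 0) ∧
  ∀ x₀ ∈ M, ∀ u₀ : ℝ, ∀ x ∈ M, ∀ t > (0:ℝ),
    hf x₀ u₀ x t = u₀ - sInf {a | ∃ γ : ℝ → Euc n,
      (∃ K : ℝ≥0, LipschitzOnWith K γ (Icc 0 t)) ∧
      (∀ τ ∈ Icc (0:ℝ) t, γ τ ∈ M) ∧ γ 0 = x ∧ γ t = x₀ ∧
      a = ∫ τ in (0:ℝ)..t, L (γ τ) (deriv γ τ) (hf x₀ u₀ (γ τ) (t - τ))}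

/-- The epigraph `Γ_φ = {(x,p,u) ∈ T*M × ℝ : u ≥ φ(x)}`. -/
def Epi (M : Set (Euc n)) (φ : Euc n → ℝ) : Set (Euc n × Euc n × ℝ) :=
  {z | z.1 ∈ M ∧ φ z.1 ≤ z.2.2}

/-- The interior `Γ̊_φ = {(x,p,u) ∈ T*M × ℝ : u > φ(x)}` of the epigraph. -/
def EpiInt (M : Set (Euc n)) (φ : Euc n → ℝ) : Set (Euc n × Euc n × ℝ) :=
  {z | z.1 ∈ M ∧ φ z.1 < z.2.2}

/-- Piecewise `C¹` curve on `[a,b]`. -/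
def PiecewiseC1On (γ : ℝ → Euc n) (a b : ℝ) : Prop :=
  ContinuousOn γ (Icc a b) ∧
  ∃ (k : ℕ) (τ : ℕ → ℝ), τ 0 = a ∧ τ k = b ∧ (∀ i < k, τ i < τ (i + 1)) ∧
    ∀ i < k, ContDiffOn ℝ 1 γ (Icc (τ i) (τ (i + 1)))


lemma fderiv_decomp {n : ℕ} (H : Euc n → Euc n → ℝ → ℝ) (hC3 : C3 H)
    (z : Euc n × Euc n × ℝ) (a b : Euc n) (c : ℝ) :
    fderiv ℝ (fun w : Euc n × Euc n × ℝ => H w.1 w.2.1 w.2.2) z (a, b, c) =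
      ⟪xGrad H z.1 z.2.1 z.2.2, a⟫ + ⟪pGrad H z.1 z.2.1 z.2.2, b⟫ +
        uDeriv H z.1 z.2.1 z.2.2 * c := by
  set F := fun w : Euc n × Euc n × ℝ => H w.1 w.2.1 w.2.2 with hFdef
  have hF : Differentiable ℝ F := hC3.differentiable (by norm_num)
  set f := fderiv ℝ F z with hf
  have hd : HasFDerivAt F f z := (hF z).hasFDerivAt
  have h1 : HasFDerivAt (fun y : Euc n => (y, z.2.1, z.2.2))
      ((ContinuousLinearMap.id ℝ (Euc n)).prod 0) z.1 :=
    HasFDerivAt.prodMk (hasFDerivAt_id z.1) (hasFDerivAt_const (z.2.1, z.2.2) z.1)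
  have hg1 : HasFDerivAt (fun y : Euc n => H y z.2.1 z.2.2)
      (f.comp ((ContinuousLinearMap.id ℝ (Euc n)).prod 0)) z.1 := by
    have := HasFDerivAt.comp z.1 (hd : HasFDerivAt F f (z.1, z.2.1, z.2.2)) h1; exact this
  have hx : ⟪xGrad H z.1 z.2.1 z.2.2, a⟫ = f (a, 0, 0) := by
    have : xGrad H z.1 z.2.1 z.2.2 =
        (InnerProductSpace.toDual ℝ (Euc n)).symm
          (fderiv ℝ (fun y : Euc n => H y z.2.1 z.2.2) z.1) := rfl
    rw [this, InnerProductSpace.toDual_symm_apply, hg1.fderiv]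
    rfl
  have h2 : HasFDerivAt (fun q : Euc n => (z.1, q, z.2.2))
      ((0 : Euc n →L[ℝ] Euc n).prod ((ContinuousLinearMap.id ℝ (Euc n)).prod 0)) z.2.1 :=
    HasFDerivAt.prodMk (hasFDerivAt_const z.1 z.2.1)
      (HasFDerivAt.prodMk (hasFDerivAt_id z.2.1) (hasFDerivAt_const z.2.2 z.2.1))
  have hg2 : HasFDerivAt (fun q : Euc n => H z.1 q z.2.2)
      (f.comp ((0 : Euc n →L[ℝ] Euc n).prod ((ContinuousLinearMap.id ℝ (Euc n)).prod 0)))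
      z.2.1 := by
    have := HasFDerivAt.comp z.2.1 (hd : HasFDerivAt F f (z.1, z.2.1, z.2.2)) h2; exact this
  have hp : ⟪pGrad H z.1 z.2.1 z.2.2, b⟫ = f (0, b, 0) := by
    have : pGrad H z.1 z.2.1 z.2.2 =
        (InnerProductSpace.toDual ℝ (Euc n)).symm
          (fderiv ℝ (fun q : Euc n => H z.1 q z.2.2) z.2.1) := rfl
    rw [this, InnerProductSpace.toDual_symm_apply, hg2.fderiv]
    rfl
  have h3 : HasDerivAt (fun w : ℝ => (z.1, z.2.1, w))
      ((0 : Euc n), (0 : Euc n), (1 : ℝ)) z.2.2 :=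
    HasDerivAt.prodMk (hasDerivAt_const z.2.2 z.1) (HasDerivAt.prodMk (hasDerivAt_const z.2.2 z.2.1) (hasDerivAt_id z.2.2))
  have hg3 : HasDerivAt (fun w : ℝ => H z.1 z.2.1 w) (f ((0 : Euc n), (0 : Euc n), (1:ℝ)))
      z.2.2 := by
    have := HasFDerivAt.comp_hasDerivAt z.2.2 (hd : HasFDerivAt F f (z.1, z.2.1, z.2.2)) h3; exact this
  have hu : uDeriv H z.1 z.2.1 z.2.2 * c = f (0, 0, c) := by
    have h4 : uDeriv H z.1 z.2.1 z.2.2 = f ((0 : Euc n), (0 : Euc n), (1:ℝ)) := hg3.deriv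
    have h5 : ((0 : Euc n), (0 : Euc n), c) = c • ((0 : Euc n), (0 : Euc n), (1:ℝ)) := by
      simp [Prod.smul_def]
    rw [h4, h5, f.map_smul, smul_eq_mul, mul_comm]
  have hsum : (a, b, c) = ((a, 0, 0) : Euc n × Euc n × ℝ) + (0, b, 0) + (0, 0, c) := by
    simp [Prod.ext_iff]
  rw [hsum, map_add, map_add, hx, hp, hu]

lemma hasDerivAt_H_along {n : ℕ} (H : Euc n → Euc n → ℝ → ℝ) (hC3 : C3 H)
    (γ : ℝ → Euc n × Euc n × ℝ) (s : ℝ)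
    (hγ : HasDerivAt γ (contactVF H (γ s)) s) :
    HasDerivAt (fun t => H (γ t).1 (γ t).2.1 (γ t).2.2)
      (-(uDeriv H (γ s).1 (γ s).2.1 (γ s).2.2 * H (γ s).1 (γ s).2.1 (γ s).2.2)) s := by
  set F := fun w : Euc n × Euc n × ℝ => H w.1 w.2.1 w.2.2 with hFdef
  have hF : Differentiable ℝ F := hC3.differentiable (by norm_num)
  have hd : HasFDerivAt F (fderiv ℝ F (γ s)) (γ s) := (hF (γ s)).hasFDerivAt
  have hcomp := hd.comp_hasDerivAt s hγ
  have hval : fderiv ℝ F (γ s) (contactVF H (γ s)) =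
      -(uDeriv H (γ s).1 (γ s).2.1 (γ s).2.2 * H (γ s).1 (γ s).2.1 (γ s).2.2) := by
    set z := γ s with hz
    have hdec := fderiv_decomp H hC3 z (pGrad H z.1 z.2.1 z.2.2)
      (-xGrad H z.1 z.2.1 z.2.2 - uDeriv H z.1 z.2.1 z.2.2 • z.2.1)
      (⟪pGrad H z.1 z.2.1 z.2.2, z.2.1⟫ - H z.1 z.2.1 z.2.2)
    rw [show contactVF H z = (pGrad H z.1 z.2.1 z.2.2,
      -xGrad H z.1 z.2.1 z.2.2 - uDeriv H z.1 z.2.1 z.2.2 • z.2.1,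
      ⟪pGrad H z.1 z.2.1 z.2.2, z.2.1⟫ - H z.1 z.2.1 z.2.2) from rfl, hdec,
      inner_sub_right, inner_neg_right, real_inner_smul_right,
      real_inner_comm (xGrad H z.1 z.2.1 z.2.2) (pGrad H z.1 z.2.1 z.2.2)]
    ring
  exact hval ▸ hcomp

lemma H_decay {n : ℕ} (H : Euc n → Euc n → ℝ → ℝ) (lam : ℝ)
    (hC3 : C3 H) (hH3 : LipInU H lam) (T : ℝ) (hT : 0 ≤ T)
    (γ : ℝ → Euc n × Euc n × ℝ)
    (hODE : ∀ s ∈ Icc (-T) T, HasDerivAt γ (contactVF H (γ s)) s) :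
    ∀ s ∈ Icc (-T) T, |H (γ s).1 (γ s).2.1 (γ s).2.2| ≤
      Real.exp (lam * |s|) * |H (γ 0).1 (γ 0).2.1 (γ 0).2.2| := by
  set h : ℝ → ℝ := fun t => H (γ t).1 (γ t).2.1 (γ t).2.2 with hh
  have hder : ∀ t ∈ Icc (-T) T, HasDerivAt h
      (-(uDeriv H (γ t).1 (γ t).2.1 (γ t).2.2 * h t)) t :=
    fun t ht => hasDerivAt_H_along H hC3 γ t (hODE t ht)
  intro s hs
  rcases le_or_gt 0 s with h0s | h0s
  · have hsub : Icc (0:ℝ) s ⊆ Icc (-T) T := Icc_subset_Icc (by linarith) hs.2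
    have key := norm_le_gronwallBound_of_norm_deriv_right_le
      (f := h) (f' := fun t => -(uDeriv H (γ t).1 (γ t).2.1 (γ t).2.2 * h t))
      (δ := |h 0|) (K := lam) (ε := 0) (a := 0) (b := s)
      (fun t ht => ((hder t (hsub ht)).continuousAt).continuousWithinAt)
      (fun t ht => (hder t (hsub (Ico_subset_Icc_self ht))).hasDerivWithinAt)
      (le_of_eq (Real.norm_eq_abs _))
      (fun t ht => by
        rw [Real.norm_eq_abs, abs_neg, abs_mul, Real.norm_eq_abs, add_zero]
        exact mul_le_mul_of_nonneg_right (hH3 (γ t).1 (γ t).2.1 (γ t).2.2) (abs_nonneg _))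
      s (right_mem_Icc.mpr h0s)
    rw [gronwallBound_ε0, sub_zero, Real.norm_eq_abs] at key
    rw [abs_of_nonneg h0s, mul_comm]
    exact key
  · set g : ℝ → ℝ := fun t => h (-t) with hg
    have hgder : ∀ t ∈ Icc (0:ℝ) (-s), HasDerivAt g
        (-(uDeriv H (γ (-t)).1 (γ (-t)).2.1 (γ (-t)).2.2 * h (-t)) * (-1)) t := by
      intro t ht
      have hmem : -t ∈ Icc (-T) T := ⟨by linarith [ht.2, hs.1], by linarith [ht.1, hT]⟩
      exact (hder (-t) hmem).comp t (hasDerivAt_neg t)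
    have key := norm_le_gronwallBound_of_norm_deriv_right_le
      (f := g) (f' := fun t => -(uDeriv H (γ (-t)).1 (γ (-t)).2.1 (γ (-t)).2.2 * h (-t)) * (-1))
      (δ := |g 0|) (K := lam) (ε := 0) (a := 0) (b := -s)
      (fun t ht => ((hgder t ht).continuousAt).continuousWithinAt)
      (fun t ht => (hgder t (Ico_subset_Icc_self ht)).hasDerivWithinAt)
      (le_of_eq (Real.norm_eq_abs _))
      (fun t ht => by
        rw [Real.norm_eq_abs, abs_mul, abs_neg, abs_neg, abs_one, mul_one, abs_mul,
          Real.norm_eq_abs, add_zero]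
        exact mul_le_mul_of_nonneg_right (hH3 (γ (-t)).1 (γ (-t)).2.1 (γ (-t)).2.2)
          (abs_nonneg _))
      (-s) (right_mem_Icc.mpr (by linarith))
    rw [gronwallBound_ε0, sub_zero, Real.norm_eq_abs] at key
    have hg0 : g 0 = h 0 := by simp [hg]
    have hgs : g (-s) = h s := by simp [hg]
    rw [hg0, hgs] at key
    rw [abs_of_neg h0s, mul_comm]
    exact key

/-- **Estimate in the proof of Lemma A.1**: under the bound
`|p·∂H/∂p| ≤ A(H)(1+|u|)`, along every integral curve of `X_H` on `[−T,T]` the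
`u`-component satisfies `|u̇(s)| ≤ A₀|u(s)| + A₀ + e^{λ|s|}|H(γ(0))|`, where
`A₀ = sup {A(h) : |h| ≤ e^{λT}|H(γ(0))|}`; in particular `|u(s)|` is bounded on `[−T,T]`. -/
theorem u_component_estimate_along_flow {n : ℕ}
    (H : Euc n → Euc n → ℝ → ℝ) (lam : ℝ) (hlam : 0 < lam)
    (hC3 : C3 H) (hH1 : PosDefInP H) (hH2 : Superlinear H) (hH3 : LipInU H lam)
    (A : ℝ → ℝ) (hAcont : Continuous A) (hApos : ∀ h, 0 < A h)
    (hbound : ∀ (x p : Euc n) (u : ℝ),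
      |⟪p, pGrad H x p u⟫| ≤ A (H x p u) * (1 + |u|))
    (T : ℝ) (hT : 0 ≤ T) (γ : ℝ → Euc n × Euc n × ℝ)
    (hODE : ∀ s ∈ Icc (-T) T, HasDerivAt γ (contactVF H (γ s)) s) :
    (∀ s ∈ Icc (-T) T,
      |(contactVF H (γ s)).2.2| ≤
        sSup (A '' {h : ℝ | |h| ≤ Real.exp (lam * T) * |H (γ 0).1 (γ 0).2.1 (γ 0).2.2|})
            * |(γ s).2.2|
          + sSup (A '' {h : ℝ | |h| ≤ Real.exp (lam * T) * |H (γ 0).1 (γ 0).2.1 (γ 0).2.2|})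
          + Real.exp (lam * |s|) * |H (γ 0).1 (γ 0).2.1 (γ 0).2.2|) ∧
    (∃ C : ℝ, ∀ s ∈ Icc (-T) T, |(γ s).2.2| ≤ C) := by
  have hdecay := H_decay H lam hC3 hH3 T hT γ hODE
  set H0 : ℝ := |H (γ 0).1 (γ 0).2.1 (γ 0).2.2| with hH0
  set R : ℝ := Real.exp (lam * T) * H0 with hR
  have hR0 : 0 ≤ R := mul_nonneg (Real.exp_pos _).le (abs_nonneg _)
  have hset : {h : ℝ | |h| ≤ R} = Icc (-R) R := by ext h; simp [abs_le]
  have hbdd : BddAbove (A '' {h : ℝ | |h| ≤ R}) := by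
    rw [hset]
    exact (isCompact_Icc.image hAcont).bddAbove
  set A0 : ℝ := sSup (A '' {h : ℝ | |h| ≤ R}) with hA0
  constructor
  · intro s hs
    have hsT : |s| ≤ T := abs_le.mpr ⟨hs.1, hs.2⟩
    have hHs : |H (γ s).1 (γ s).2.1 (γ s).2.2| ≤ R := by
      refine (hdecay s hs).trans ?_
      exact mul_le_mul_of_nonneg_right
        (Real.exp_le_exp.mpr (mul_le_mul_of_nonneg_left hsT hlam.le)) (abs_nonneg _)
    have hmemA : A (H (γ s).1 (γ s).2.1 (γ s).2.2) ≤ A0 :=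
      le_csSup hbdd ⟨_, hHs, rfl⟩
    have hA0pos : 0 < A0 := lt_of_lt_of_le (hApos _) hmemA
    have h1 : |(contactVF H (γ s)).2.2| ≤
        |⟪(γ s).2.1, pGrad H (γ s).1 (γ s).2.1 (γ s).2.2⟫|
          + |H (γ s).1 (γ s).2.1 (γ s).2.2| := by
      rw [show (contactVF H (γ s)).2.2 =
        ⟪pGrad H (γ s).1 (γ s).2.1 (γ s).2.2, (γ s).2.1⟫
          - H (γ s).1 (γ s).2.1 (γ s).2.2 from rfl,
        real_inner_comm]
      exact abs_sub _ _
    have h2 := hbound (γ s).1 (γ s).2.1 (γ s).2.2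
    have h3 : A (H (γ s).1 (γ s).2.1 (γ s).2.2) * (1 + |(γ s).2.2|) ≤
        A0 * (1 + |(γ s).2.2|) :=
      mul_le_mul_of_nonneg_right hmemA (by positivity)
    have := hdecay s hs
    calc |(contactVF H (γ s)).2.2|
        ≤ A0 * (1 + |(γ s).2.2|) + |H (γ s).1 (γ s).2.1 (γ s).2.2| := by
          refine h1.trans (add_le_add (h2.trans h3) le_rfl)
      _ ≤ A0 * |(γ s).2.2| + A0 + Real.exp (lam * |s|) * H0 := by
          nlinarith [hdecay s hs]
  · have hγcont : ContinuousOn γ (Icc (-T) T) :=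
      fun s hs => (hODE s hs).continuousAt.continuousWithinAt
    have hucont : ContinuousOn (fun s => (γ s).2.2) (Icc (-T) T) :=
      (continuous_snd.comp continuous_snd).comp_continuousOn hγcont
    obtain ⟨C, hC⟩ := isCompact_Icc.exists_bound_of_continuousOn hucont
    exact ⟨C, fun s hs => (Real.norm_eq_abs _) ▸ hC s hs⟩


end
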